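/- For all natural numbers n and p, the following identity of integers holds: ∑_{k=0}^{n+1} (−1)^{n+1−k} · C(n+1, k) · cad⁺(k,p) = (p+1)! · S(n+1, p+1), where cad⁺(k,p) denotes the number of strictly monotone maps c : Fin(p+1) → Finset (Fin k) with c 0 ≠ ∅ (anchored chains of length p in Fin k; this is 0 for k = 0), C(a,b) is the binomial coefficient, and S is the Stirling number of the second kind. (This expresses the matrix identity bin⁻¹ · cad⁺ = breve cad⁺.) -/

import Mathlib

open Finset

/-- The Stirling number of the second kind `S(n,k)`. -/
noncomputable def stirling2 (n k : ℕ) : ℕ :=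
  Nat.card {P : Finpartition (Finset.univ : Finset (Fin n)) // P.parts.card = k}

/-- `cad⁺(k,p)`: the number of anchored chains of length `p` in `Fin k`. -/
noncomputable def cadPlus (k p : ℕ) : ℕ :=
  Nat.card {c : Fin (p + 1) → Finset (Fin k) // StrictMono c ∧ c 0 ≠ ∅}

/-- number of surjections `Fin m → Fin r` -/
noncomputable def surjCount (m r : ℕ) : ℕ :=
  Nat.card {g : Fin m → Fin r // Function.Surjective g}

section master
variable {k p : ℕ}

def chainHits (f : Fin k → Fin (p + 2)) : Prop := ∀ j : Fin (p + 1), ∃ x, f x = j.castSucc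

instance : DecidablePred (chainHits (k := k) (p := p)) := fun _ =>
  inferInstanceAs (Decidable (∀ _, _))

def levelSet (f : Fin k → Fin (p + 2)) (i : Fin (p + 1)) : Finset (Fin k) :=
  univ.filter fun x => f x ≤ i.castSucc

def levelFun (c : Fin (p + 1) → Finset (Fin k)) (x : Fin k) : Fin (p + 2) :=
  if h : (univ.filter fun i : Fin (p + 1) => x ∈ c i).Nonempty then
    ((univ.filter fun i : Fin (p + 1) => x ∈ c i).min' h).castSucc
  else Fin.last (p + 1)

lemma mem_levelSet {f : Fin k → Fin (p + 2)} {i x} : x ∈ levelSet f i ↔ f x ≤ i.castSucc := by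
  simp [levelSet]

lemma levelFun_le_iff {c : Fin (p + 1) → Finset (Fin k)} (hc : Monotone c) {x i} :
    levelFun c x ≤ i.castSucc ↔ x ∈ c i := by
  unfold levelFun
  split_ifs with h
  · rw [Fin.castSucc_le_castSucc_iff]
    constructor
    · intro hle
      have hmem := Finset.min'_mem _ h
      rw [Finset.mem_filter] at hmem
      exact hc hle hmem.2
    · intro hx
      exact Finset.min'_le _ i (Finset.mem_filter.mpr ⟨Finset.mem_univ _, hx⟩)
  · constructor
    · intro hle
      exact absurd hle (Fin.castSucc_lt_last i).not_ge
    · intro hx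
      exact absurd ⟨i, Finset.mem_filter.mpr ⟨Finset.mem_univ _, hx⟩⟩ h

lemma chainHits_levelFun {c : Fin (p + 1) → Finset (Fin k)} (hc : StrictMono c)
    (h0 : c 0 ≠ ∅) : chainHits (levelFun c) := by
  intro j
  induction j using Fin.cases with
  | zero =>
    obtain ⟨x, hx⟩ := Finset.nonempty_iff_ne_empty.mpr h0
    refine ⟨x, ?_⟩
    have hne : (univ.filter fun i : Fin (p + 1) => x ∈ c i).Nonempty :=
      ⟨0, Finset.mem_filter.mpr ⟨Finset.mem_univ _, hx⟩⟩
    unfold levelFun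
    rw [dif_pos hne]
    congr 1
    exact le_antisymm (Finset.min'_le (univ.filter fun i : Fin (p + 1) => x ∈ c i) 0
      (Finset.mem_filter.mpr ⟨Finset.mem_univ _, hx⟩)) (Fin.zero_le _)
  | succ i =>
    have hlt : c i.castSucc ⊂ c i.succ := Finset.lt_iff_ssubset.mp (hc (Fin.castSucc_lt_succ (i := i)))
    obtain ⟨x, hx, hx'⟩ := Finset.exists_of_ssubset hlt
    refine ⟨x, ?_⟩
    have hne : (univ.filter fun i' : Fin (p + 1) => x ∈ c i').Nonempty :=
      ⟨i.succ, Finset.mem_filter.mpr ⟨Finset.mem_univ _, hx⟩⟩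
    unfold levelFun
    rw [dif_pos hne]
    congr 1
    refine le_antisymm (Finset.min'_le (univ.filter fun i' : Fin (p + 1) => x ∈ c i') i.succ
      (Finset.mem_filter.mpr ⟨Finset.mem_univ _, hx⟩)) ?_
    by_contra hlt'
    push_neg at hlt'
    have hle : (univ.filter fun i' : Fin (p + 1) => x ∈ c i').min' hne ≤ i.castSucc :=
      Fin.le_castSucc_iff.mpr hlt'
    have hmem := Finset.min'_mem _ hne
    rw [Finset.mem_filter] at hmem
    exact hx' (hc.monotone hle hmem.2)

/-- anchored chains correspond to level functions hitting every non-top value. -/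
def chainEquiv : {f : Fin k → Fin (p + 2) // chainHits f} ≃
    {c : Fin (p + 1) → Finset (Fin k) // StrictMono c ∧ c 0 ≠ ∅} where
  toFun f := by
    refine ⟨levelSet f.1, ?_, ?_⟩
    · intro i j hij
      rw [Finset.lt_iff_ssubset, Finset.ssubset_iff_of_subset]
      · obtain ⟨x, hx⟩ := f.2 j
        refine ⟨x, mem_levelSet.mpr (le_of_eq hx), fun hmem => ?_⟩
        rw [mem_levelSet, hx, Fin.castSucc_le_castSucc_iff] at hmem
        exact absurd hmem (not_le.mpr hij)
      · intro x hx
        rw [mem_levelSet] at hx ⊢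
        exact hx.trans (Fin.castSucc_le_castSucc_iff.mpr hij.le)
    · obtain ⟨x, hx⟩ := f.2 0
      apply Finset.nonempty_iff_ne_empty.mp
      exact ⟨x, mem_levelSet.mpr (le_of_eq hx)⟩
  invFun c := ⟨levelFun c.1, chainHits_levelFun c.2.1 c.2.2⟩
  left_inv f := by
    obtain ⟨f, hf⟩ := f
    apply Subtype.ext
    funext x
    show levelFun (levelSet f) x = f x
    unfold levelFun
    by_cases hlast : f x = Fin.last (p + 1)
    · rw [dif_neg]
      · exact hlast.symm
      · rintro ⟨i, hi⟩
        rw [Finset.mem_filter, mem_levelSet, hlast] at hi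
        exact absurd hi.2 (Fin.castSucc_lt_last i).not_ge
    · have hj : ((f x).castPred hlast) ∈ univ.filter fun i : Fin (p + 1) => x ∈ levelSet f i := by
        rw [Finset.mem_filter, mem_levelSet, Fin.castSucc_castPred]
        exact ⟨Finset.mem_univ _, le_refl _⟩
      rw [dif_pos ⟨_, hj⟩]
      have hmin : (univ.filter fun i : Fin (p + 1) => x ∈ levelSet f i).min' ⟨_, hj⟩ =
          (f x).castPred hlast := by
        refine le_antisymm (Finset.min'_le _ _ hj) ?_
        have hmem := Finset.min'_mem _ (⟨_, hj⟩ : (univ.filter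
          fun i : Fin (p + 1) => x ∈ levelSet f i).Nonempty)
        rw [Finset.mem_filter, mem_levelSet] at hmem
        rw [← Fin.castSucc_le_castSucc_iff, Fin.castSucc_castPred]
        exact hmem.2
      rw [hmin, Fin.castSucc_castPred]
  right_inv c := by
    obtain ⟨c, hc, h0⟩ := c
    apply Subtype.ext
    funext i
    show levelSet (levelFun c) i = c i
    ext x
    rw [mem_levelSet, levelFun_le_iff hc.monotone]

lemma cadPlus_eq_card_hits : cadPlus k p = Nat.card {f : Fin k → Fin (p + 2) // chainHits f} :=
  (Nat.card_congr chainEquiv).symm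

end master

section decomp
variable {k p : ℕ}

lemma card_surj_subtype (s : Finset (Fin k)) :
    Nat.card {g : ↥s → Fin (p + 1) // Function.Surjective g} = surjCount s.card (p + 1) := by
  refine Nat.card_congr (Equiv.subtypeEquiv
    (Equiv.arrowCongr s.equivFin (Equiv.refl _)) fun g => ?_)
  constructor
  · intro hg
    intro j
    obtain ⟨x, hx⟩ := hg j
    exact ⟨s.equivFin x, by simp [Equiv.arrowCongr_apply, hx]⟩
  · intro hg
    intro j
    obtain ⟨y, hy⟩ := hg j
    refine ⟨s.equivFin.symm y, ?_⟩
    simpa [Equiv.arrowCongr_apply] using hy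

lemma key_fiber (s : Finset (Fin k)) :
    ((univ.filter (chainHits (k := k) (p := p))).filter
        fun f => (univ.filter fun x => f x ≠ Fin.last (p + 1)) = s).card
      = surjCount s.card (p + 1) := by
  classical
  rw [← card_surj_subtype s, Nat.card_eq_fintype_card, Fintype.card_subtype]
  refine Finset.card_bij'
    (fun f hf => fun x => (f x.1).castPred ?_)
    (fun g _ => fun y => if h : y ∈ s then (g ⟨y, h⟩).castSucc else Fin.last (p + 1))
    ?_ ?_ ?_ ?_
  · -- castPred legitimacy
    have hf2 := (Finset.mem_filter.mp hf).2
    have hx : x.1 ∈ univ.filter fun y => f y ≠ Fin.last (p + 1) := hf2 ▸ x.2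
    exact (Finset.mem_filter.mp hx).2
  · -- i maps into surjections
    intro f hf
    rw [Finset.mem_filter]
    refine ⟨Finset.mem_univ _, ?_⟩
    intro j
    have hhits := (Finset.mem_filter.mp (Finset.mem_filter.mp hf).1).2
    obtain ⟨x, hx⟩ := hhits j
    have hf2 := (Finset.mem_filter.mp hf).2
    have hxs : x ∈ s := by
      rw [← hf2, Finset.mem_filter]
      exact ⟨Finset.mem_univ _, by rw [hx]; exact (Fin.castSucc_lt_last j).ne⟩
    refine ⟨⟨x, hxs⟩, ?_⟩
    simp only [hx, Fin.castPred_castSucc]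
  · -- j maps into chain-hitting fns with support s
    intro g hg
    have hgs : Function.Surjective g := (Finset.mem_filter.mp hg).2
    rw [Finset.mem_filter, Finset.mem_filter]
    refine ⟨⟨Finset.mem_univ _, ?_⟩, ?_⟩
    · intro j
      obtain ⟨⟨x, hx⟩, hgx⟩ := hgs j
      exact ⟨x, by dsimp only; rw [dif_pos hx, hgx]⟩
    · ext y
      rw [Finset.mem_filter]
      constructor
      · rintro ⟨-, hy⟩
        by_contra hys
        dsimp only at hy
        exact hy (dif_neg hys)
      · intro hy
        refine ⟨Finset.mem_univ _, ?_⟩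
        dsimp only
        rw [dif_pos hy]
        exact (Fin.castSucc_lt_last _).ne
  · -- left inverse
    intro f hf
    funext y
    dsimp only
    by_cases hy : y ∈ s
    · rw [dif_pos hy, Fin.castSucc_castPred]
    · rw [dif_neg hy]
      have hf2 := (Finset.mem_filter.mp hf).2
      by_contra hne
      exact hy (hf2 ▸ (Finset.mem_filter.mpr ⟨Finset.mem_univ _, fun h => hne h.symm⟩))
  · -- right inverse
    intro g hg
    funext x
    dsimp only
    have : (if h : x.1 ∈ s then (g ⟨x.1, h⟩).castSucc else Fin.last (p + 1))
        = (g x).castSucc := by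
      rw [dif_pos x.2]
    simp only [this, Fin.castPred_castSucc]

lemma card_hits_eq :
    Nat.card {f : Fin k → Fin (p + 2) // chainHits f} =
      ∑ m ∈ range (k + 1), (k.choose m) * surjCount m (p + 1) := by
  classical
  rw [Nat.card_eq_fintype_card, Fintype.card_subtype]
  rw [Finset.card_eq_sum_card_fiberwise
    (f := fun f : Fin k → Fin (p + 2) => univ.filter fun x => f x ≠ Fin.last (p + 1))
    (t := univ) (fun _ _ => Finset.mem_univ _)]
  rw [Finset.sum_congr rfl fun s _ => key_fiber s]
  rw [show (univ : Finset (Finset (Fin k))) = (univ : Finset (Fin k)).powerset from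
    Finset.powerset_univ.symm]
  rw [Finset.sum_powerset_apply_card (fun m => surjCount m (p + 1))]
  simp [Finset.card_univ, smul_eq_mul]

lemma cadPlus_eq (k p : ℕ) :
    cadPlus k p = ∑ m ∈ range (k + 1), (k.choose m) * surjCount m (p + 1) := by
  rw [cadPlus_eq_card_hits, card_hits_eq]

end decomp

section stirling
variable {n p : ℕ}

/-- the fiber of `f` at `j` -/
def fib (f : Fin (n + 1) → Fin (p + 1)) (j : Fin (p + 1)) : Finset (Fin (n + 1)) :=
  univ.filter fun x => f x = j

lemma mem_fib {f : Fin (n + 1) → Fin (p + 1)} {j x} : x ∈ fib f j ↔ f x = j := by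
  simp [fib]

/-- the partition of `Fin (n+1)` into fibers of a surjection -/
def fiberPartition (f : Fin (n + 1) → Fin (p + 1)) (hf : Function.Surjective f) :
    Finpartition (univ : Finset (Fin (n + 1))) where
  parts := univ.image (fib f)
  supIndep := by
    rw [Finset.supIndep_iff_pairwiseDisjoint]
    intro a ha b hb hab
    rw [Finset.mem_coe, Finset.mem_image] at ha hb
    obtain ⟨j1, -, rfl⟩ := ha
    obtain ⟨j2, -, rfl⟩ := hb
    have hj : j1 ≠ j2 := fun h => hab (by rw [h])
    show Disjoint (fib f j1) (fib f j2)
    rw [Finset.disjoint_left]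
    intro x hx1 hx2
    rw [mem_fib] at hx1 hx2
    exact hj (hx1 ▸ hx2)
  sup_parts := by
    apply le_antisymm
    · exact Finset.sup_le fun t _ => Finset.subset_univ t
    · intro x _
      rw [Finset.mem_sup]
      exact ⟨fib f (f x), Finset.mem_image.mpr ⟨f x, Finset.mem_univ _, rfl⟩,
        mem_fib.mpr rfl⟩
  bot_notMem := by
    intro h
    rw [Finset.mem_image] at h
    obtain ⟨j, -, hj⟩ := h
    obtain ⟨x, hx⟩ := hf j
    have hmem : x ∈ fib f j := mem_fib.mpr hx
    rw [hj] at hmem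
    exact absurd hmem (Finset.notMem_empty x)

lemma fib_injective {f : Fin (n + 1) → Fin (p + 1)} (hf : Function.Surjective f) :
    Function.Injective (fib f) := by
  intro j1 j2 h
  obtain ⟨x, hx⟩ := hf j1
  have h1 : x ∈ fib f j1 := mem_fib.mpr hx
  rw [h] at h1
  rw [mem_fib] at h1
  exact hx.symm.trans h1

lemma card_fiberPartition {f : Fin (n + 1) → Fin (p + 1)} (hf : Function.Surjective f) :
    (fiberPartition f hf).parts.card = p + 1 := by
  show (univ.image (fib f)).card = p + 1
  rw [Finset.card_image_of_injective _ (fib_injective hf), Finset.card_univ, Fintype.card_fin]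

/-- the labeling equiv of the fiber partition -/
def labelEquiv (f : Fin (n + 1) → Fin (p + 1)) (hf : Function.Surjective f) :
    ↥(fiberPartition f hf).parts ≃ Fin (p + 1) where
  toFun t := f (t.1.min' ((fiberPartition f hf).nonempty_of_mem_parts t.2))
  invFun j := ⟨fib f j, Finset.mem_image.mpr ⟨j, Finset.mem_univ _, rfl⟩⟩
  left_inv t := by
    obtain ⟨t, ht⟩ := t
    obtain ⟨j, -, hj⟩ := Finset.mem_image.mp ht
    apply Subtype.ext
    show fib f (f (t.min' _)) = t
    have hmem : t.min' ((fiberPartition f hf).nonempty_of_mem_parts ht) ∈ t :=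
      Finset.min'_mem _ _
    have hval : f (t.min' ((fiberPartition f hf).nonempty_of_mem_parts ht)) = j := by
      refine mem_fib.mp (show t.min' ((fiberPartition f hf).nonempty_of_mem_parts ht) ∈ fib f j from ?_)
      rw [hj]
      exact hmem
    rw [hval, hj]
  right_inv j := by
    show f ((fib f j).min' _) = j
    exact mem_fib.mp (Finset.min'_mem _ _)

/-- recover a surjection from a labeled partition -/
def unlabel (P : Finpartition (univ : Finset (Fin (n + 1)))) (e : ↥P.parts ≃ Fin (p + 1)) :
    Fin (n + 1) → Fin (p + 1) :=
  fun y => e ⟨P.part y, P.part_mem.2 (Finset.mem_univ y)⟩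

lemma unlabel_surjective (P : Finpartition (univ : Finset (Fin (n + 1))))
    (e : ↥P.parts ≃ Fin (p + 1)) : Function.Surjective (unlabel P e) := by
  intro j
  obtain ⟨x, hx⟩ := P.nonempty_of_mem_parts (e.symm j).2
  refine ⟨x, ?_⟩
  have h : (⟨P.part x, P.part_mem.2 (Finset.mem_univ x)⟩ : ↥P.parts) = e.symm j :=
    Subtype.ext (P.part_eq_of_mem (e.symm j).2 hx)
  show e ⟨P.part x, P.part_mem.2 (Finset.mem_univ x)⟩ = j
  rw [h, Equiv.apply_symm_apply]

/-- sigma-pair congruence helper -/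
lemma sigma_helper {P Q : Finpartition (univ : Finset (Fin (n + 1)))} (h : Q = P)
    {hQ : Q.parts.card = p + 1} {hP : P.parts.card = p + 1}
    (eQ : ↥Q.parts ≃ Fin (p + 1)) (eP : ↥P.parts ≃ Fin (p + 1))
    (he : ∀ t : ↥Q.parts, eQ t = eP ⟨t.1, h ▸ t.2⟩) :
    (⟨⟨Q, hQ⟩, eQ⟩ : Σ P : {P : Finpartition (univ : Finset (Fin (n + 1))) //
        P.parts.card = p + 1}, (↥P.1.parts ≃ Fin (p + 1))) = ⟨⟨P, hP⟩, eP⟩ := by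
  subst h
  exact congrArg (Sigma.mk _) (Equiv.ext he)

/-- surjections correspond to partitions with a labeling of the parts -/
def surjEquiv : {f : Fin (n + 1) → Fin (p + 1) // Function.Surjective f} ≃
    Σ P : {P : Finpartition (univ : Finset (Fin (n + 1))) // P.parts.card = p + 1},
      (↥P.1.parts ≃ Fin (p + 1)) where
  toFun f := ⟨⟨fiberPartition f.1 f.2, card_fiberPartition f.2⟩, labelEquiv f.1 f.2⟩
  invFun x := ⟨unlabel x.1.1 x.2, unlabel_surjective x.1.1 x.2⟩
  left_inv f := by
    obtain ⟨f, hf⟩ := f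
    apply Subtype.ext
    funext x
    show labelEquiv f hf ⟨(fiberPartition f hf).part x,
      (fiberPartition f hf).part_mem.2 (Finset.mem_univ x)⟩ = f x
    show f ((((fiberPartition f hf).part x)).min' _) = f x
    have hpart : (fiberPartition f hf).part x = fib f (f x) :=
      (fiberPartition f hf).part_eq_of_mem
        (Finset.mem_image.mpr ⟨f x, Finset.mem_univ _, rfl⟩) (mem_fib.mpr rfl)
    have hmem : (((fiberPartition f hf).part x)).min'
        ((fiberPartition f hf).nonempty_of_mem_parts
          ((fiberPartition f hf).part_mem.2 (Finset.mem_univ x))) ∈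
        (fiberPartition f hf).part x := Finset.min'_mem _ _
    have hmem' : (((fiberPartition f hf).part x)).min'
        ((fiberPartition f hf).nonempty_of_mem_parts
          ((fiberPartition f hf).part_mem.2 (Finset.mem_univ x))) ∈ fib f (f x) := by
      rw [← hpart]
      exact hmem
    exact mem_fib.mp hmem'
  right_inv x := by
    obtain ⟨⟨P, hP⟩, e⟩ := x
    have hkey : ∀ j, fib (unlabel P e) j = (e.symm j).1 := by
      intro j
      ext x
      rw [mem_fib]
      constructor
      · intro hx
        have h1 : (⟨P.part x, P.part_mem.2 (Finset.mem_univ x)⟩ : ↥P.parts) = e.symm j := by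
          rw [← hx]
          exact (Equiv.symm_apply_apply e _).symm
        have h2 := congrArg Subtype.val h1
        simp only at h2
        rw [← h2]
        exact P.mem_part (Finset.mem_univ x)
      · intro hx
        have h1 : (⟨P.part x, P.part_mem.2 (Finset.mem_univ x)⟩ : ↥P.parts) = e.symm j :=
          Subtype.ext (P.part_eq_of_mem (e.symm j).2 hx)
        show e ⟨P.part x, P.part_mem.2 (Finset.mem_univ x)⟩ = j
        rw [h1, Equiv.apply_symm_apply]
    have hparts : (fiberPartition (unlabel P e) (unlabel_surjective P e)).parts = P.parts := by
      ext t
      show t ∈ univ.image (fib (unlabel P e)) ↔ t ∈ P.parts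
      constructor
      · intro ht
        obtain ⟨j, -, rfl⟩ := Finset.mem_image.mp ht
        rw [hkey j]
        exact (e.symm j).2
      · intro ht
        refine Finset.mem_image.mpr ⟨e ⟨t, ht⟩, Finset.mem_univ _, ?_⟩
        rw [hkey, Equiv.symm_apply_apply]
    refine sigma_helper (Finpartition.ext hparts) _ _ fun t => ?_
    -- labelEquiv value
    have ht' : t.1 ∈ P.parts := hparts ▸ t.2
    show (unlabel P e) (t.1.min' _) = e ⟨t.1, _⟩
    have hmem : t.1.min' ((fiberPartition (unlabel P e)
        (unlabel_surjective P e)).nonempty_of_mem_parts t.2) ∈ t.1 := Finset.min'_mem _ _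
    have hpart : P.part (t.1.min' ((fiberPartition (unlabel P e)
        (unlabel_surjective P e)).nonempty_of_mem_parts t.2)) = t.1 :=
      P.part_eq_of_mem ht' hmem
    show e ⟨P.part _, _⟩ = e ⟨t.1, _⟩
    exact congrArg e (Subtype.ext hpart)

lemma surjCount_eq (n p : ℕ) :
    surjCount (n + 1) (p + 1) = Nat.factorial (p + 1) * stirling2 (n + 1) (p + 1) := by
  classical
  have hfin : Finite (Finpartition (univ : Finset (Fin (n + 1)))) :=
    Finite.of_injective (fun P => P.parts) fun P Q h => Finpartition.ext h
  letI : Fintype (Finpartition (univ : Finset (Fin (n + 1)))) := Fintype.ofFinite _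
  rw [surjCount, Nat.card_congr (surjEquiv (n := n) (p := p)), stirling2]
  rw [Nat.card_eq_fintype_card, Nat.card_eq_fintype_card, Fintype.card_sigma]
  have hcard : ∀ P : {P : Finpartition (univ : Finset (Fin (n + 1))) //
      P.parts.card = p + 1}, Fintype.card (↥P.1.parts ≃ Fin (p + 1)) = (p + 1).factorial := by
    intro P
    have h1 : Fintype.card ↥P.1.parts = p + 1 := by
      rw [Fintype.card_coe, P.2]
    rw [Fintype.card_equiv (Fintype.equivFinOfCardEq h1), Fintype.card_coe, P.2]
  rw [Finset.sum_congr rfl fun P _ => hcard P, Finset.sum_const, Finset.card_univ, smul_eq_mul,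
    mul_comm]

end stirling

lemma alt_sum (N : ℕ) :
    ∑ i ∈ range (N + 1), (-1 : ℤ) ^ (N - i) * (N.choose i) = if N = 0 then 1 else 0 := by
  have h := Finset.sum_range_reflect (fun j => (-1 : ℤ) ^ j * (N.choose j)) (N + 1)
  rw [← Int.alternating_sum_range_choose, ← h]
  refine Finset.sum_congr rfl fun i hi => ?_
  rw [Finset.mem_range] at hi
  have hiN : i ≤ N := Nat.lt_succ_iff.mp hi
  have : N + 1 - 1 - i = N - i := by omega
  rw [this, Nat.choose_symm hiN]

theorem binInv_mul_cadPlus (n p : ℕ) :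
    ∑ k ∈ Finset.range (n + 2),
        (-1 : ℤ) ^ (n + 1 - k) * Nat.choose (n + 1) k * cadPlus k p =
      Nat.factorial (p + 1) * stirling2 (n + 1) (p + 1) := by
  rw [show ((p + 1).factorial : ℤ) * (stirling2 (n + 1) (p + 1) : ℤ)
      = (surjCount (n + 1) (p + 1) : ℤ) by rw [surjCount_eq]; push_cast; ring]
  -- rewrite cadPlus and extend the inner sum to `range (n+2)`
  have hcad : ∀ k ∈ range (n + 2),
      (-1 : ℤ) ^ (n + 1 - k) * Nat.choose (n + 1) k * cadPlus k p =
      ∑ m ∈ range (n + 2), (-1 : ℤ) ^ (n + 1 - k) * Nat.choose (n + 1) k *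
        (Nat.choose k m * surjCount m (p + 1)) := by
    intro k hk
    rw [Finset.mem_range] at hk
    rw [cadPlus_eq k p, ← Finset.mul_sum]
    congr 1
    have hsub : range (k + 1) ⊆ range (n + 2) := by
      apply Finset.range_subset_range.mpr; omega
    rw [Finset.sum_subset hsub ?_]
    · push_cast; ring_nf
    · intro m hm hm'
      rw [Finset.mem_range] at hm hm'
      have : k < m := by omega
      simp [Nat.choose_eq_zero_of_lt this]
  rw [Finset.sum_congr rfl hcad, Finset.sum_comm]
  have hinner : ∀ m ∈ range (n + 2),
      ∑ k ∈ range (n + 2), (-1 : ℤ) ^ (n + 1 - k) * Nat.choose (n + 1) k *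
        (Nat.choose k m * surjCount m (p + 1)) =
      (if m = n + 1 then 1 else 0) * Nat.choose (n + 1) m * surjCount m (p + 1) := by
    intro m hm
    rw [Finset.mem_range] at hm
    have hm1 : m ≤ n + 1 := by omega
    -- drop the terms with k < m
    have h1 : ∑ k ∈ range (n + 2), (-1 : ℤ) ^ (n + 1 - k) * Nat.choose (n + 1) k *
        (Nat.choose k m * surjCount m (p + 1)) =
        ∑ k ∈ Ico m (n + 2), (-1 : ℤ) ^ (n + 1 - k) * Nat.choose (n + 1) k *
        (Nat.choose k m * surjCount m (p + 1)) := by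
      rw [Finset.range_eq_Ico]
      rw [← Finset.sum_Ico_consecutive _ (Nat.zero_le m) (by omega : m ≤ n + 2)]
      have : ∑ k ∈ Ico 0 m, (-1 : ℤ) ^ (n + 1 - k) * Nat.choose (n + 1) k *
          (Nat.choose k m * surjCount m (p + 1)) = 0 := by
        apply Finset.sum_eq_zero
        intro k hk
        rw [Finset.mem_Ico] at hk
        simp [Nat.choose_eq_zero_of_lt hk.2]
      rw [this, zero_add]
    rw [h1, Finset.sum_Ico_eq_sum_range]
    have hrw : ∀ i ∈ range (n + 2 - m),
        (-1 : ℤ) ^ (n + 1 - (m + i)) * Nat.choose (n + 1) (m + i) *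
          (Nat.choose (m + i) m * surjCount m (p + 1)) =
        ((-1 : ℤ) ^ (n + 1 - m - i) * ((n + 1 - m).choose i)) *
          (Nat.choose (n + 1) m * surjCount m (p + 1)) := by
      intro i hi
      rw [Finset.mem_range] at hi
      have h2 : m + i ≤ n + 1 := by omega
      have h3 : (Nat.choose (n + 1) (m + i)) * (Nat.choose (m + i) m) =
          Nat.choose (n + 1) m * (n + 1 - m).choose i := by
        have := Nat.choose_mul (n := n + 1) (Nat.le_add_right m i)
        simpa [Nat.add_sub_cancel_left] using this
      have h4 : n + 1 - (m + i) = n + 1 - m - i := by omega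
      rw [h4]
      have h3' : (((n + 1).choose (m + i) : ℤ)) * ((m + i).choose m)
          = ((n + 1).choose m : ℤ) * ((n + 1 - m).choose i) := by exact_mod_cast h3
      linear_combination ((-1 : ℤ) ^ (n + 1 - m - i) * (surjCount m (p + 1) : ℤ)) * h3'
    rw [Finset.sum_congr rfl hrw, ← Finset.sum_mul]
    have h5 : n + 2 - m = (n + 1 - m) + 1 := by omega
    rw [h5, alt_sum (n + 1 - m)]
    by_cases hc : m = n + 1
    · have : n + 1 - m = 0 := by omega
      simp [hc, this]
    · have : n + 1 - m ≠ 0 := by omega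
      simp [hc, this]
  rw [Finset.sum_congr rfl hinner]
  rw [Finset.sum_eq_single (n + 1)]
  · simp
  · intro m hm hne
    simp [hne]
  · intro h
    exact absurd (Finset.mem_range.mpr (by omega)) h
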